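/- Consider ℝ^{3×3} with coordinates w_{ij} for 1 ≤ i,j ≤ 3. The set C of all w satisfying w_{12}+w_{21} ≥ w_{11}+w_{22}, w_{13}+w_{21} ≥ w_{11}+w_{23}, w_{13}+w_{22} ≥ w_{12}+w_{23}, w_{12}+w_{31} ≥ w_{11}+w_{32}, and w_{22}+w_{31} ≥ w_{21}+w_{32} equals the set of all matrices of the form a_1·R_1 + a_2·R_2 + a_3·R_3 + M(a,b,c,d,e,f,g), where a_1, a_2, a_3 range over non-negative reals, a,b,c,d,e,f,g range over all reals, R_1 is the matrix whose only nonzero entry is −1 in position (2,3), R_2 is the matrix whose only nonzero entry is −1 in position (1,1), R_3 is the matrix whose only nonzero entry is −1 in position (3,2), and M(a,b,c,d,e,f,g) is the matrix with rows (a+e, a+f, a+g), (b+e, b+f, b+g), (c+e, c+f, d). -/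

import Mathlib

/-!
STATEMENT 16: The antidiagonal cone of [1432] in ℝ^{3×3} (cut out by the five inequalities)
equals the set of matrices a₁R₁ + a₂R₂ + a₃R₃ + M(a,b,c,d,e,f,g) with a₁,a₂,a₃ ≥ 0 and
a,b,c,d,e,f,g arbitrary reals, where R₁, R₂, R₃ have a single entry −1 in positions
(2,3), (1,1), (3,2) respectively, and M(a,…,g) has rows (a+e, a+f, a+g), (b+e, b+f, b+g),
(c+e, c+f, d).

Indices are 0-indexed: the matrix entry `w_{ij}` (1-indexed) is `w (i-1) (j-1)`.
-/

/-- `R₁`: the matrix whose only nonzero entry is `−1` in (1-indexed) position (2,3). -/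
def R1 : Matrix (Fin 3) (Fin 3) ℝ := Matrix.single 1 2 (-1)

/-- `R₂`: the matrix whose only nonzero entry is `−1` in (1-indexed) position (1,1). -/
def R2 : Matrix (Fin 3) (Fin 3) ℝ := Matrix.single 0 0 (-1)

/-- `R₃`: the matrix whose only nonzero entry is `−1` in (1-indexed) position (3,2). -/
def R3 : Matrix (Fin 3) (Fin 3) ℝ := Matrix.single 2 1 (-1)

/-- The lineality-space parametrization `M(a,b,c,d,e,f,g)`. -/
def linM (a b c d e f g : ℝ) : Matrix (Fin 3) (Fin 3) ℝ :=
  !![a + e, a + f, a + g; b + e, b + f, b + g; c + e, c + f, d]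

theorem antidiagonal_cone_1432 :
    {w : Matrix (Fin 3) (Fin 3) ℝ |
        w 0 0 + w 1 1 ≤ w 0 1 + w 1 0 ∧
        w 0 0 + w 1 2 ≤ w 0 2 + w 1 0 ∧
        w 0 1 + w 1 2 ≤ w 0 2 + w 1 1 ∧
        w 0 0 + w 2 1 ≤ w 0 1 + w 2 0 ∧
        w 1 0 + w 2 1 ≤ w 1 1 + w 2 0}
    = {w : Matrix (Fin 3) (Fin 3) ℝ |
        ∃ a1 a2 a3 : ℝ, 0 ≤ a1 ∧ 0 ≤ a2 ∧ 0 ≤ a3 ∧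
          ∃ a b c d e f g : ℝ,
            w = a1 • R1 + a2 • R2 + a3 • R3 + linM a b c d e f g} := by
  ext w
  simp only [Set.mem_setOf_eq]
  constructor
  · rintro ⟨h1, h2, h3, h4, h5⟩
    refine ⟨w 1 1 - w 0 1 + w 0 2 - w 1 2, w 0 1 + w 1 0 - w 1 1 - w 0 0,
      w 2 0 - w 1 0 + w 1 1 - w 2 1, by linarith, by linarith, by linarith,
      0, w 1 1 - w 0 1, w 2 0 - w 1 0 + w 1 1 - w 0 1, w 2 2,
      w 1 0 - w 1 1 + w 0 1, w 0 1, w 0 2, ?_⟩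
    ext i j
    fin_cases i <;> fin_cases j <;>
      simp [R1, R2, R3, linM, Matrix.single] <;> ring
  · rintro ⟨a1, a2, a3, h1, h2, h3, a, b, c, d, e, f, g, rfl⟩
    simp [R1, R2, R3, linM, Matrix.single]
    refine ⟨by linarith, by linarith, by linarith, by linarith, by linarith⟩
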